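/- Inverse Bonferroni inequality: Let (Ω, λ) be a probability space, let C_1,…,C_k ⊆ Ω be measurable sets, and let T be a tree with vertex set {1,2,…,k} and edge set E(T). Then λ(⋃_{i=1}^k C_i) ≤ Σ_{i=1}^k λ(C_i) − Σ_{{i,j}∈E(T)} λ(C_i ∩ C_j). -/

import Mathlib

open MeasureTheory Filter Topology ENNReal

/-- `x` covers `a` if `x` is a subsequence of `a`. -/
def Covers {X : Type*} {r k : ℕ} (x : Fin r → X) (a : Fin k → X) : Prop :=
  ∃ g : Fin r → Fin k, StrictMono g ∧ ∀ i, a (g i) = x i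

/-- `C ⊆ X^r` is a covering `(k-r)`-insertion code over `X`: every sequence in `X^k`
is covered by some sequence in `C`. -/
def IsCoveringCode {X : Type*} (r k : ℕ) (C : Set (Fin r → X)) : Prop :=
  ∀ a : Fin k → X, ∃ x ∈ C, Covers x a

/-- Minimum size of a covering `(k-r)`-insertion code over the alphabet `[n]`. -/
noncomputable def covNum (n k r : ℕ) : ℕ :=
  sInf {m | ∃ C : Finset (Fin r → Fin n), IsCoveringCode r k (↑C : Set (Fin r → Fin n)) ∧ C.card = m}

/-- The unit cube `[0,1]^r`. -/
def unitCube (r : ℕ) : Set (Fin r → ℝ) := {x | ∀ i, x i ∈ Set.Icc (0 : ℝ) 1}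

/-- `C ⊆ [0,1]^r` covers `[0,1]^k`. -/
def CoversCube (r k : ℕ) (C : Set (Fin r → ℝ)) : Prop :=
  ∀ a ∈ unitCube k, ∃ x ∈ C, Covers x a

/-- Delete the `i`-th coordinate of a length `r+1` sequence. -/
def deleteAt {X : Type*} {r : ℕ} (i : Fin (r + 1)) (x : Fin (r + 1) → X) : Fin r → X :=
  x ∘ i.succAbove

/-- `extSet C i` is the set `C_i` of sequences in `X^{r+1}` whose subsequence obtained by
deleting the `i`-th coordinate belongs to `C`. -/
def extSet {X : Type*} {r : ℕ} (C : Set (Fin r → X)) (i : Fin (r + 1)) :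
    Set (Fin (r + 1) → X) :=
  {x | deleteAt i x ∈ C}

/-- A set of sequences is symmetric if it is closed under permuting the coordinates. -/
def IsSymmetric {X : Type*} {k : ℕ} (M : Set (Fin k → X)) : Prop :=
  ∀ x ∈ M, ∀ σ : Equiv.Perm (Fin k), x ∘ σ ∈ M

/-- The symmetric closure of a set of sequences. -/
def SymClosure {X : Type*} {k : ℕ} (M : Set (Fin k → X)) : Set (Fin k → X) :=
  {x | ∃ σ : Equiv.Perm (Fin k), x ∘ σ ∈ M}

/-- A Turán `(n,k,r)`-system: a family of `r`-element subsets of `[n]` such that every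
`k`-element subset of `[n]` contains a member of the family. -/
def IsTuranSystem (n k r : ℕ) (F : Finset (Finset (Fin n))) : Prop :=
  (∀ A ∈ F, A.card = r) ∧ ∀ K : Finset (Fin n), K.card = k → ∃ A ∈ F, A ⊆ K

/-- Minimum size of a Turán `(n,k,r)`-system. -/
noncomputable def turanNum (n k r : ℕ) : ℕ :=
  sInf {m | ∃ F : Finset (Finset (Fin n)), IsTuranSystem n k r F ∧ F.card = m}

section TreeCombinatorics

open SimpleGraph


variable {V : Type*} [DecidableEq V] {G : SimpleGraph V}

lemma ib_adj_dist_ne (hT : G.IsTree) (r : V) {u v : V} (hadj : G.Adj u v) :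
    G.dist r u ≠ G.dist r v := by
  intro heq
  obtain ⟨q, hqp, hql⟩ := hT.isConnected.exists_path_of_dist r v
  by_cases hu : u ∈ q.support
  · have h1 : G.dist r u ≤ (q.takeUntil u hu).length := SimpleGraph.dist_le _
    have h2 := congrArg Walk.length (q.take_spec hu)
    rw [Walk.length_append] at h2
    have h3 : 0 < (q.dropUntil u hu).length := by
      rcases Nat.eq_zero_or_pos (q.dropUntil u hu).length with h | h
      · exact absurd (Walk.eq_of_length_eq_zero h) hadj.ne
      · exact h
    omega
  · have hq' : (q.concat hadj.symm).IsPath := by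
      rw [← Walk.isPath_reverse_iff, Walk.reverse_concat]
      exact hqp.reverse.cons (by simpa using hu)
    obtain ⟨p, hpp, hpl⟩ := hT.isConnected.exists_path_of_dist r u
    have hpq := hT.IsAcyclic.path_unique ⟨p, hpp⟩ ⟨q.concat hadj.symm, hq'⟩
    have hlen : p.length = (q.concat hadj.symm).length := by
      rw [Subtype.ext_iff] at hpq
      exact congrArg Walk.length hpq
    rw [Walk.length_concat] at hlen
    omega

lemma ib_adj_dist_succ (hT : G.IsTree) (r : V) {u v : V} (hadj : G.Adj u v) :
    G.dist r v = G.dist r u + 1 ∨ G.dist r u = G.dist r v + 1 := by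
  have h1 : G.dist r v ≤ G.dist r u + G.dist u v := hT.isConnected.dist_triangle
  have h2 : G.dist r u ≤ G.dist r v + G.dist v u := hT.isConnected.dist_triangle
  rw [SimpleGraph.dist_eq_one_iff_adj.mpr hadj] at h1
  rw [SimpleGraph.dist_eq_one_iff_adj.mpr hadj.symm] at h2
  have h3 := ib_adj_dist_ne hT r hadj
  omega

lemma ib_parent_unique (hT : G.IsTree) (r : V) {x u₁ u₂ : V}
    (h1 : G.Adj u₁ x) (h2 : G.Adj u₂ x)
    (d1 : G.dist r u₁ + 1 = G.dist r x) (d2 : G.dist r u₂ + 1 = G.dist r x) :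
    u₁ = u₂ := by
  obtain ⟨p₁, hp₁, hl₁⟩ := hT.isConnected.exists_path_of_dist r u₁
  obtain ⟨p₂, hp₂, hl₂⟩ := hT.isConnected.exists_path_of_dist r u₂
  have hx₁ : x ∉ p₁.support := by
    intro hx
    have := SimpleGraph.dist_le (p₁.takeUntil x hx)
    have := p₁.length_takeUntil_le hx
    omega
  have hx₂ : x ∉ p₂.support := by
    intro hx
    have := SimpleGraph.dist_le (p₂.takeUntil x hx)
    have := p₂.length_takeUntil_le hx
    omega
  have hP₁ : (p₁.concat h1).IsPath := by
    rw [← Walk.isPath_reverse_iff, Walk.reverse_concat]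
    exact hp₁.reverse.cons (by simpa using hx₁)
  have hP₂ : (p₂.concat h2).IsPath := by
    rw [← Walk.isPath_reverse_iff, Walk.reverse_concat]
    exact hp₂.reverse.cons (by simpa using hx₂)
  have hpq := hT.IsAcyclic.path_unique ⟨p₁.concat h1, hP₁⟩ ⟨p₂.concat h2, hP₂⟩
  rw [Subtype.ext_iff] at hpq
  obtain ⟨hv, -⟩ := Walk.concat_inj hpq
  exact hv

variable [LinearOrder V]

/-- The endpoint of an edge farther from the root `r` (with an arbitrary
symmetric tie-break). -/
noncomputable def ibDeeper (G : SimpleGraph V) (r : V) : Sym2 V → V :=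
  Sym2.lift ⟨fun a b => if G.dist r a < G.dist r b then b
      else if G.dist r b < G.dist r a then a else max a b, by
    intro a b
    dsimp only
    rcases lt_trichotomy (G.dist r a) (G.dist r b) with h | h | h
    · simp [h, h.not_gt]
    · simp [h, lt_irrefl, max_comm]
    · simp [h, h.not_gt]⟩

lemma ib_exists_parent (hT : G.IsTree) (r : V) {e : Sym2 V} (he : e ∈ G.edgeSet) :
    ∃ u, e = s(u, ibDeeper G r e) ∧ G.Adj u (ibDeeper G r e) ∧
      G.dist r u + 1 = G.dist r (ibDeeper G r e) := by
  induction e with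
  | _ a b =>
    have hadj : G.Adj a b := he
    rcases ib_adj_dist_succ hT r hadj with h | h
    · have hd : ibDeeper G r s(a, b) = b := by
        simp [ibDeeper, Sym2.lift_mk, h]
      rw [hd]
      exact ⟨a, rfl, hadj, h.symm⟩
    · have hd : ibDeeper G r s(a, b) = a := by
        simp [ibDeeper, Sym2.lift_mk, h, Nat.lt_irrefl]
      rw [hd]
      exact ⟨b, Sym2.eq_swap, hadj.symm, h.symm⟩

omit [DecidableEq V] in
lemma ib_count [Fintype V] [DecidableEq V] [DecidableRel G.Adj]
    (hT : G.IsTree) (S : Finset V) (hS : S.Nonempty) :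
    (G.edgeFinset.filter (fun e => ∀ i ∈ e, i ∈ S)).card + 1 ≤ S.card := by
  obtain ⟨r, hr⟩ := hS
  have hmaps : ∀ e ∈ G.edgeFinset.filter (fun e => ∀ i ∈ e, i ∈ S),
      ibDeeper G r e ∈ S.erase r := by
    intro e he
    rw [Finset.mem_filter] at he
    obtain ⟨he₁, he₂⟩ := he
    obtain ⟨u, hrep, hadj, hd⟩ := ib_exists_parent hT r (SimpleGraph.mem_edgeFinset.mp he₁)
    set d := ibDeeper G r e with hDdef
    have hmem : d ∈ e := by rw [hrep]; exact Sym2.mem_mk_right _ _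
    refine Finset.mem_erase.mpr ⟨?_, he₂ _ hmem⟩
    intro hcon
    rw [hcon, SimpleGraph.dist_self] at hd
    omega
  have hinj : Set.InjOn (ibDeeper G r)
      ↑(G.edgeFinset.filter (fun e => ∀ i ∈ e, i ∈ S)) := by
    intro e₁ he₁ e₂ he₂ heq
    simp only [Finset.coe_filter, Set.mem_setOf_eq] at he₁ he₂
    obtain ⟨u₁, hrep₁, hadj₁, hd₁⟩ :=
      ib_exists_parent hT r (SimpleGraph.mem_edgeFinset.mp he₁.1)
    obtain ⟨u₂, hrep₂, hadj₂, hd₂⟩ :=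
      ib_exists_parent hT r (SimpleGraph.mem_edgeFinset.mp he₂.1)
    rw [heq] at hrep₁ hadj₁ hd₁
    have : u₁ = u₂ := ib_parent_unique hT r hadj₁ hadj₂ hd₁ hd₂
    rw [this] at hrep₁
    exact hrep₁.trans hrep₂.symm
  have hcard := Finset.card_le_card_of_injOn _ hmaps hinj
  rw [Finset.card_erase_of_mem hr] at hcard
  have : 1 ≤ S.card := Finset.card_pos.mpr ⟨r, hr⟩
  omega

end TreeCombinatorics

/-- Inverse Bonferroni inequality: for a probability space `(Ω, μ)`, measurable
sets `C_1, …, C_k` and a tree `T` on the vertex set `{1,…,k}`,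
`μ(⋃ᵢ Cᵢ) ≤ Σᵢ μ(Cᵢ) − Σ_{e ∈ E(T)} μ(C_e)`. -/
theorem inverse_bonferroni {Ω : Type*} [MeasurableSpace Ω] (μ : Measure Ω)
    [IsProbabilityMeasure μ] {k : ℕ} (C : Fin k → Set Ω)
    (hC : ∀ i, MeasurableSet (C i)) (G : SimpleGraph (Fin k)) [DecidableRel G.Adj]
    (hT : G.IsTree) :
    (μ (⋃ i, C i)).toReal ≤
      ∑ i, (μ (C i)).toReal - ∑ e ∈ G.edgeFinset, (μ (⋂ i ∈ e, C i)).toReal := by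
  classical
  have hU : MeasurableSet (⋃ i, C i) := MeasurableSet.iUnion hC
  have hmI : ∀ e : Sym2 (Fin k), MeasurableSet (⋂ i ∈ e, C i) := fun e =>
    MeasurableSet.iInter fun i => MeasurableSet.iInter fun _ => hC i
  have hIntU : Integrable ((⋃ i, C i).indicator (1 : Ω → ℝ)) μ :=
    (integrable_const (1 : ℝ)).indicator hU
  have hInt1 : ∀ i : Fin k, Integrable ((C i).indicator (1 : Ω → ℝ)) μ := fun i =>
    (integrable_const (1 : ℝ)).indicator (hC i)
  have hInt2 : ∀ e : Sym2 (Fin k), Integrable ((⋂ i ∈ e, C i).indicator (1 : Ω → ℝ)) μ :=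
    fun e => (integrable_const (1 : ℝ)).indicator (hmI e)
  have hIntF : Integrable (fun ω => ∑ i, (C i).indicator (1 : Ω → ℝ) ω) μ :=
    integrable_finset_sum _ fun i _ => hInt1 i
  have hIntG : Integrable
      (fun ω => ∑ e ∈ G.edgeFinset, (⋂ i ∈ e, C i).indicator (1 : Ω → ℝ) ω) μ :=
    integrable_finset_sum _ fun e _ => hInt2 e
  have key : ∀ ω, (⋃ i, C i).indicator (1 : Ω → ℝ) ω ≤
      (∑ i, (C i).indicator (1 : Ω → ℝ) ω)
        - ∑ e ∈ G.edgeFinset, (⋂ i ∈ e, C i).indicator (1 : Ω → ℝ) ω := by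
    intro ω
    set S : Finset (Fin k) := Finset.univ.filter (fun i => ω ∈ C i) with hSdef
    have h1 : (∑ i, (C i).indicator (1 : Ω → ℝ) ω) = (S.card : ℝ) := by
      rw [hSdef, ← Finset.sum_boole]
      exact Finset.sum_congr rfl fun i _ => by simp [Set.indicator_apply]
    have h2 : (∑ e ∈ G.edgeFinset, (⋂ i ∈ e, C i).indicator (1 : Ω → ℝ) ω)
        = ((G.edgeFinset.filter (fun e => ∀ i ∈ e, i ∈ S)).card : ℝ) := by
      rw [← Finset.sum_boole]
      refine Finset.sum_congr rfl fun e _ => ?_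
      by_cases h : ∀ i ∈ e, i ∈ S
      · have : ω ∈ ⋂ i ∈ e, C i := by
          rw [Set.mem_iInter₂]
          intro i hi
          have := h i hi
          rw [hSdef, Finset.mem_filter] at this
          exact this.2
        rw [Set.indicator_of_mem this, if_pos h]; rfl
      · have : ω ∉ ⋂ i ∈ e, C i := by
          rw [Set.mem_iInter₂]
          push_neg at h ⊢
          obtain ⟨i, hi, hiS⟩ := h
          refine ⟨i, hi, ?_⟩
          rw [hSdef, Finset.mem_filter] at hiS
          simpa using hiS
        rw [Set.indicator_of_notMem this, if_neg h]
    rw [h1, h2]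
    by_cases hω : ω ∈ ⋃ i, C i
    · obtain ⟨i, hi⟩ := Set.mem_iUnion.mp hω
      have hSne : S.Nonempty := ⟨i, by simp [hSdef, hi]⟩
      have hcount := ib_count hT S hSne
      rw [Set.indicator_of_mem hω]
      have h3 : ((G.edgeFinset.filter (fun e => ∀ i ∈ e, i ∈ S)).card : ℝ) + 1
          ≤ (S.card : ℝ) := by
        have hcount' : (G.edgeFinset.filter (fun e => ∀ i ∈ e, i ∈ S)).card + 1
            ≤ S.card := by convert hcount using 4
        exact_mod_cast hcount'
      simp only [Pi.one_apply]
      linarith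
    · have hSempty : S = ∅ := by
        rw [hSdef, Finset.filter_eq_empty_iff]
        intro i _
        exact fun h => hω (Set.mem_iUnion.mpr ⟨i, h⟩)
      have hfil : G.edgeFinset.filter (fun e => ∀ i ∈ e, i ∈ S) = ∅ := by
        rw [Finset.filter_eq_empty_iff]
        intro e _
        push_neg
        exact ⟨e.out.1, Sym2.out_fst_mem e, by simp [hSempty]⟩
      rw [Set.indicator_of_notMem hω, hfil, hSempty]
      simp
  calc (μ (⋃ i, C i)).toReal
      = ∫ ω, (⋃ i, C i).indicator (1 : Ω → ℝ) ω ∂μ := (integral_indicator_one hU).symm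
    _ ≤ ∫ ω, ((∑ i, (C i).indicator (1 : Ω → ℝ) ω)
          - ∑ e ∈ G.edgeFinset, (⋂ i ∈ e, C i).indicator (1 : Ω → ℝ) ω) ∂μ :=
        integral_mono hIntU (hIntF.sub hIntG) key
    _ = ∑ i, (μ (C i)).toReal - ∑ e ∈ G.edgeFinset, (μ (⋂ i ∈ e, C i)).toReal := by
        rw [integral_sub hIntF hIntG, integral_finset_sum _ fun i _ => hInt1 i,
          integral_finset_sum _ fun e _ => hInt2 e]
        simp only [integral_indicator_one (hC _), integral_indicator_one (hmI _)]
        rfl
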